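/- Let W be a Morse sequence on K with reference pair (∧,∨). (1) If z and z′ are p-cycles of K with ∧(z) = ∧(z′), then z and z′ are homologous. (2) If z and z′ are p-cocycles of K with ∨(z) = ∨(z′), then z and z′ are cohomologous. -/

import Mathlib

/-! ## Basic notions: simplicial complexes, collapses, expansions, fillings -/

open scoped symmDiff

variable {V : Type*} [DecidableEq V]

/-- A (finite) simplicial complex: a finite collection of nonempty finite sets that is
closed under taking nonempty subsets. -/
def IsComplex (K : Finset (Finset V)) : Prop :=
  ∀ τ ∈ K, τ.Nonempty ∧ ∀ σ, σ ⊆ τ → σ.Nonempty → σ ∈ K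

/-- `ν` is a facet (inclusion-maximal face) of `K`. -/
def IsFacet (K : Finset (Finset V)) (ν : Finset V) : Prop :=
  ν ∈ K ∧ ∀ ρ ∈ K, ν ⊆ ρ → ρ = ν

/-- `(σ, τ)` is a free pair for `K`: `σ ⊊ τ` and `τ` is the only face of `K`
strictly containing `σ`. -/
def IsFreePair (K : Finset (Finset V)) (σ τ : Finset V) : Prop :=
  σ ∈ K ∧ τ ∈ K ∧ σ ⊂ τ ∧ ∀ ρ ∈ K, σ ⊂ ρ → ρ = τ

/-- `K` is an elementary expansion of `L` (equivalently, `L` is an elementary collapse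
of `K`): `L = K \ {σ, τ}` for some free pair `(σ, τ)` of `K`. -/
def ElemExpansion (L K : Finset (Finset V)) : Prop :=
  ∃ σ τ, IsFreePair K σ τ ∧ L = K \ {σ, τ}

/-- `K` is an elementary filling of `L` (equivalently, `L` is an elementary perforation
of `K`): `L = K \ {ν}` for some facet `ν` of `K`. -/
def ElemFilling (L K : Finset (Finset V)) : Prop :=
  ∃ ν, IsFacet K ν ∧ L = K \ {ν}

/-- `L` is an elementary collapse of `K`. -/
def ElemCollapse (K L : Finset (Finset V)) : Prop :=
  ∃ σ τ, IsFreePair K σ τ ∧ L = K \ {σ, τ}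

/-- `K` collapses onto `L`: there is a sequence of elementary collapses from `K` to `L`. -/
def CollapsesOnto (K L : Finset (Finset V)) : Prop :=
  Relation.ReflTransGen ElemCollapse K L

/-! ## Morse sequences -/

/-- A Morse sequence `⟨∅ = K₀, …, K_k = K⟩`: each `K_i` is a simplicial complex that is
an elementary expansion or an elementary filling of `K_{i-1}`. -/
structure MorseSeq (V : Type*) [DecidableEq V] where
  k : ℕ
  seq : ℕ → Finset (Finset V)
  cpx : ∀ i ≤ k, IsComplex (seq i)
  init : seq 0 = ∅
  step : ∀ i, 1 ≤ i → i ≤ k → ElemExpansion (seq (i - 1)) (seq i) ∨ ElemFilling (seq (i - 1)) (seq i)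

/-- The simplicial complex `K = K_k` on which the Morse sequence lives. -/
def MorseSeq.cplx (W : MorseSeq V) : Finset (Finset V) := W.seq W.k

/-- A face added by a filling step: a critical face of `W`. -/
def MorseSeq.Critical (W : MorseSeq V) (ν : Finset V) : Prop :=
  ∃ i, 1 ≤ i ∧ i ≤ W.k ∧ W.seq i \ W.seq (i - 1) = {ν}

/-- `(σ, τ)` is a regular pair for `W`: the two faces are added together by an
elementary expansion step. -/
def MorseSeq.Regular (W : MorseSeq V) (σ τ : Finset V) : Prop :=
  ∃ i, 1 ≤ i ∧ i ≤ W.k ∧ σ ⊂ τ ∧ W.seq i \ W.seq (i - 1) = {σ, τ}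

/-- `σ` is lower regular for `W`. -/
def MorseSeq.LowerRegular (W : MorseSeq V) (σ : Finset V) : Prop := ∃ τ, W.Regular σ τ

/-- `τ` is upper regular for `W`. -/
def MorseSeq.UpperRegular (W : MorseSeq V) (τ : Finset V) : Prop := ∃ σ, W.Regular σ τ

/-! ## Chains modulo 2 -/

/-- The boundary `∂(σ)` of a simplex: the chain of its (nonempty) codimension-one faces. -/
def bd (σ : Finset V) : Finset (Finset V) :=
  σ.powerset.filter fun ρ => ρ.Nonempty ∧ ρ.card + 1 = σ.card

/-- The coboundary `δ(σ)` of a simplex in `K`: the chain of faces of `K` of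
codimension one over `σ` containing `σ`. -/
def cobd (K : Finset (Finset V)) (σ : Finset V) : Finset (Finset V) :=
  K.filter fun τ => σ ⊆ τ ∧ σ.card + 1 = τ.card

/-- Mod-2 linear extension: `chainSum c f` is the sum (symmetric difference) of
the chains `f σ` over `σ ∈ c`; an element belongs to it iff it belongs to an odd
number of the `f σ`. -/
def chainSum (c : Finset (Finset V)) (f : Finset V → Finset (Finset V)) : Finset (Finset V) :=
  (c.biUnion f).filter fun ν => (c.filter fun σ => ν ∈ f σ).card % 2 = 1

/-- `c` is a `p`-chain of `K`: a set of `p`-simplices of `K`. -/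
def IsChainOf (K : Finset (Finset V)) (p : ℕ) (c : Finset (Finset V)) : Prop :=
  ∀ ν ∈ c, ν ∈ K ∧ ν.card = p + 1

/-- `c` is a chain of critical `p`-simplices of `W` (an element of `Ŵ[p]`). -/
def IsCritChain (W : MorseSeq V) (p : ℕ) (c : Finset (Finset V)) : Prop :=
  ∀ ν ∈ c, W.Critical ν ∧ ν.card = p + 1

/-! ## Frames, reference and coreference maps -/

/-- A frame on `W`: it assigns to each `p`-simplex of `K` a chain of critical
`p`-simplices of `W`. -/
def IsFrame (W : MorseSeq V) (Υ : Finset V → Finset (Finset V)) : Prop :=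
  ∀ ν ∈ W.cplx, ∀ μ ∈ Υ ν, W.Critical μ ∧ μ.card = ν.card

/-- `Λ` is the reference map of `W`: a frame with `Λ(ν) = ν` for critical `ν`, and
`Λ(τ) = 0`, `Λ(∂τ) = 0` for upper regular `τ`. -/
def IsRefMap (W : MorseSeq V) (Λ : Finset V → Finset (Finset V)) : Prop :=
  IsFrame W Λ ∧ (∀ ν, W.Critical ν → Λ ν = {ν}) ∧
    ∀ τ, W.UpperRegular τ → Λ τ = ∅ ∧ chainSum (bd τ) Λ = ∅

/-- `Λ` is the coreference map of `W`: a frame with `Λ(ν) = ν` for critical `ν`, and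
`Λ(σ) = 0`, `Λ(δσ) = 0` for lower regular `σ`. -/
def IsCorefMap (W : MorseSeq V) (Λ : Finset V → Finset (Finset V)) : Prop :=
  IsFrame W Λ ∧ (∀ ν, W.Critical ν → Λ ν = {ν}) ∧
    ∀ σ, W.LowerRegular σ → Λ σ = ∅ ∧ chainSum (cobd W.cplx σ) Λ = ∅

/-- The extension map `∧̃` of `W` (defined from the coreference map `Vee`):
`∧̃(κ) = {ν ∈ K | κ ∈ ∨(ν)}`. -/
def extMap (W : MorseSeq V) (Vee : Finset V → Finset (Finset V)) (κ : Finset V) :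
    Finset (Finset V) :=
  W.cplx.filter fun ν => κ ∈ Vee ν

/-- The coextension map `∨̃` of `W` (defined from the reference map `Λ`):
`∨̃(κ) = {ν ∈ K | κ ∈ ∧(ν)}`. -/
def coextMap (W : MorseSeq V) (Λ : Finset V → Finset (Finset V)) (κ : Finset V) :
    Finset (Finset V) :=
  W.cplx.filter fun ν => κ ∈ Λ ν

/-! ## Homologous cycles, cohomologous cocycles (mod 2) -/

/-- Two `p`-chains of `K` are homologous: their sum is the boundary of a `(p+1)`-chain
of `K`. -/
def Homologous (K : Finset (Finset V)) (p : ℕ) (z z' : Finset (Finset V)) : Prop :=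
  ∃ c, IsChainOf K (p + 1) c ∧ chainSum c bd = symmDiff z z'

/-- Two `p`-chains of `K` are cohomologous: their sum is the coboundary of a
`(p-1)`-chain of `K`. -/
def Cohomologous (K : Finset (Finset V)) (p : ℕ) (z z' : Finset (Finset V)) : Prop :=
  ∃ c, IsChainOf K (p - 1) c ∧ chainSum c (cobd K) = symmDiff z z'


/-! ## Auxiliary lemmas -/

section ChainSum

variable {c a b : Finset (Finset V)} {f : Finset V → Finset (Finset V)} {ν : Finset V}

lemma mem_chainSum : ν ∈ chainSum c f ↔ (c.filter fun σ => ν ∈ f σ).card % 2 = 1 := by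
  constructor
  · intro h; exact (Finset.mem_filter.1 h).2
  · intro h
    refine Finset.mem_filter.2 ⟨?_, h⟩
    have hne : (c.filter fun σ => ν ∈ f σ).Nonempty := by
      rw [Finset.nonempty_iff_ne_empty]
      intro he; rw [he] at h; simp at h
    obtain ⟨σ, hσ⟩ := hne
    rw [Finset.mem_filter] at hσ
    exact Finset.mem_biUnion.2 ⟨σ, hσ.1, hσ.2⟩

lemma chainSum_empty : chainSum (∅ : Finset (Finset V)) f = ∅ := by
  simp [chainSum]

lemma chainSum_singleton {τ : Finset V} : chainSum {τ} f = f τ := by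
  ext ν
  rw [mem_chainSum, Finset.filter_singleton]
  by_cases h : ν ∈ f τ <;> simp [h]

lemma count_even_of_chainSum_empty (h : chainSum c f = ∅) (ν : Finset V) :
    (c.filter fun σ => ν ∈ f σ).card % 2 = 0 := by
  have := @mem_chainSum V _ c f ν
  rw [h] at this
  simp only [Finset.notMem_empty, false_iff] at this
  omega

lemma filter_symmDiff' (P : Finset V → Prop) [DecidablePred P] :
    (a ∆ b).filter P = a.filter P ∆ b.filter P := by
  ext x
  simp only [Finset.mem_filter, Finset.mem_symmDiff]
  tauto

lemma card_symmDiff' (s t : Finset (Finset V)) :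
    (s ∆ t).card + (s ∩ t).card + (t ∩ s).card = s.card + t.card := by
  have h1 := Finset.card_sdiff_add_card_inter s t
  have h2 := Finset.card_sdiff_add_card_inter t s
  have h3 : (s ∆ t).card = (s \ t).card + (t \ s).card := by
    rw [symmDiff_def, Finset.sup_eq_union,
      Finset.card_union_of_disjoint disjoint_sdiff_sdiff]
  omega

lemma chainSum_symmDiff : chainSum (a ∆ b) f = chainSum a f ∆ chainSum b f := by
  ext ν
  rw [Finset.mem_symmDiff, mem_chainSum, mem_chainSum, mem_chainSum,
    filter_symmDiff' (fun σ => ν ∈ f σ)]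
  have h := card_symmDiff' (a.filter fun σ => ν ∈ f σ) (b.filter fun σ => ν ∈ f σ)
  have h2 : ((a.filter fun σ => ν ∈ f σ) ∩ (b.filter fun σ => ν ∈ f σ)).card
      = ((b.filter fun σ => ν ∈ f σ) ∩ (a.filter fun σ => ν ∈ f σ)).card := by
    rw [Finset.inter_comm]
  omega

end ChainSum

set_option linter.unusedSectionVars false

section BD

variable {K : Finset (Finset V)} {σ τ ρ : Finset V}

lemma mem_bd : ρ ∈ bd σ ↔ ρ ⊆ σ ∧ ρ.Nonempty ∧ ρ.card + 1 = σ.card := by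
  simp [bd, Finset.mem_filter, Finset.mem_powerset, and_assoc]

lemma mem_cobd : τ ∈ cobd K σ ↔ τ ∈ K ∧ σ ⊆ τ ∧ σ.card + 1 = τ.card := by
  simp [cobd, Finset.mem_filter, and_assoc]

lemma freePair_card (hK : IsComplex K) (h : IsFreePair K σ τ) : σ.card + 1 = τ.card := by
  obtain ⟨hσ, hτ, hst, huniq⟩ := h
  obtain ⟨t, htτ, htσ⟩ := Finset.exists_of_ssubset hst
  have hsub : insert t σ ⊆ τ := Finset.insert_subset htτ hst.subset
  have hmem : insert t σ ∈ K := (hK τ hτ).2 _ hsub (Finset.insert_nonempty _ _)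
  have heq : insert t σ = τ := huniq _ hmem (Finset.ssubset_insert htσ)
  rw [← heq, Finset.card_insert_of_notMem htσ]

lemma ssubset_of_subset_card {s t : Finset V} (h : s ⊆ t) (hc : s.card < t.card) : s ⊂ t := by
  refine Finset.ssubset_iff_subset_ne.2 ⟨h, ?_⟩
  rintro rfl; omega

lemma bd_bd (τ : Finset V) : chainSum (bd τ) bd = ∅ := by
  ext ν
  simp only [Finset.notMem_empty, iff_false]
  rw [mem_chainSum]
  rcases Finset.eq_empty_or_nonempty ((bd τ).filter fun σ => ν ∈ bd σ) with he | ⟨σ₀, hσ₀⟩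
  · rw [he]; simp
  · rw [Finset.mem_filter, mem_bd, mem_bd] at hσ₀
    obtain ⟨⟨hσ₀τ, hσ₀ne, hσ₀c⟩, hνσ₀, hνne, hνc⟩ := hσ₀
    have hντ : ν ⊆ τ := hνσ₀.trans hσ₀τ
    have hcard : ν.card + 2 = τ.card := by omega
    have hfil : ((bd τ).filter fun σ => ν ∈ bd σ) = (τ \ ν).image (fun a => insert a ν) := by
      ext σ
      rw [Finset.mem_filter, mem_bd, mem_bd, Finset.mem_image]
      constructor
      · rintro ⟨⟨hστ, hσne, hσc⟩, hνσ, -, hνσc⟩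
        have h1 : (σ \ ν).card = 1 := by
          rw [Finset.card_sdiff_of_subset hνσ]; omega
        obtain ⟨a, ha⟩ := Finset.card_eq_one.1 h1
        have haσ : a ∈ σ \ ν := by rw [ha]; exact Finset.mem_singleton_self a
        rw [Finset.mem_sdiff] at haσ
        refine ⟨a, Finset.mem_sdiff.2 ⟨hστ haσ.1, haσ.2⟩, ?_⟩
        have : ν ∪ σ \ ν = σ := Finset.union_sdiff_of_subset hνσ
        rw [ha] at this
        rw [← this, Finset.union_comm]
        rw [Finset.insert_eq]
      · rintro ⟨a, ha, rfl⟩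
        rw [Finset.mem_sdiff] at ha
        have hca : (insert a ν).card = ν.card + 1 := Finset.card_insert_of_notMem ha.2
        refine ⟨⟨Finset.insert_subset ha.1 hντ, Finset.insert_nonempty _ _, by omega⟩,
          Finset.subset_insert _ _, hνne, by omega⟩
    rw [hfil, Finset.card_image_of_injOn, Finset.card_sdiff_of_subset hντ]
    · omega
    · intro a ha b hb hab
      rw [Finset.mem_coe, Finset.mem_sdiff] at ha hb
      have hab' : insert a ν = insert b ν := hab
      have : a ∈ insert b ν := by rw [← hab']; exact Finset.mem_insert_self a ν
      rcases Finset.mem_insert.1 this with h | h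
      · exact h
      · exact absurd h ha.2

lemma cobd_cobd (hK : IsComplex K) (σ : Finset V) : chainSum (cobd K σ) (cobd K) = ∅ := by
  ext ν
  simp only [Finset.notMem_empty, iff_false]
  rw [mem_chainSum]
  rcases Finset.eq_empty_or_nonempty ((cobd K σ).filter fun ρ => ν ∈ cobd K ρ) with he | ⟨ρ₀, hρ₀⟩
  · rw [he]; simp
  · rw [Finset.mem_filter, mem_cobd, mem_cobd] at hρ₀
    obtain ⟨⟨hρ₀K, hσρ₀, hσc⟩, hνK, hρ₀ν, hρ₀c⟩ := hρ₀
    have hσν : σ ⊆ ν := hσρ₀.trans hρ₀ν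
    have hcard : σ.card + 2 = ν.card := by omega
    have hfil : ((cobd K σ).filter fun ρ => ν ∈ cobd K ρ) = (ν \ σ).image (fun a => insert a σ) := by
      ext ρ
      rw [Finset.mem_filter, mem_cobd, mem_cobd, Finset.mem_image]
      constructor
      · rintro ⟨⟨hρK, hσρ, hσρc⟩, -, hρν, hρνc⟩
        have h1 : (ρ \ σ).card = 1 := by
          rw [Finset.card_sdiff_of_subset hσρ]; omega
        obtain ⟨a, ha⟩ := Finset.card_eq_one.1 h1
        have haρ : a ∈ ρ \ σ := by rw [ha]; exact Finset.mem_singleton_self a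
        rw [Finset.mem_sdiff] at haρ
        refine ⟨a, Finset.mem_sdiff.2 ⟨hρν haρ.1, haρ.2⟩, ?_⟩
        have : σ ∪ ρ \ σ = ρ := Finset.union_sdiff_of_subset hσρ
        rw [ha] at this
        rw [← this, Finset.union_comm]
        rw [Finset.insert_eq]
      · rintro ⟨a, ha, rfl⟩
        rw [Finset.mem_sdiff] at ha
        have hca : (insert a σ).card = σ.card + 1 := Finset.card_insert_of_notMem ha.2
        have hsub : insert a σ ⊆ ν := Finset.insert_subset ha.1 hσν
        refine ⟨⟨(hK ν hνK).2 _ hsub (Finset.insert_nonempty _ _),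
          Finset.subset_insert _ _, by omega⟩, hνK, hsub, by omega⟩
    rw [hfil, Finset.card_image_of_injOn, Finset.card_sdiff_of_subset hσν]
    · omega
    · intro a ha b hb hab
      rw [Finset.mem_coe, Finset.mem_sdiff] at ha hb
      have hab' : insert a σ = insert b σ := hab
      have : a ∈ insert b σ := by rw [← hab']; exact Finset.mem_insert_self a σ
      rcases Finset.mem_insert.1 this with h | h
      · exact h
      · exact absurd h ha.2

end BD

section Morse

variable {W : MorseSeq V} {μ ν σ τ : Finset V}

lemma MorseSeq.subset_succ (W : MorseSeq V) {i : ℕ} (h1 : 1 ≤ i) (h2 : i ≤ W.k) :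
    W.seq (i - 1) ⊆ W.seq i := by
  rcases W.step i h1 h2 with ⟨σ, τ, _, h⟩ | ⟨ν, _, h⟩ <;> rw [h] <;> exact Finset.sdiff_subset

lemma MorseSeq.mono (W : MorseSeq V) {i j : ℕ} (hij : i ≤ j) (hj : j ≤ W.k) :
    W.seq i ⊆ W.seq j := by
  induction j with
  | zero => rw [Nat.le_zero.1 hij]
  | succ n ihn =>
    rcases Nat.lt_or_ge i (n + 1) with h | h
    · have hs := W.subset_succ (i := n + 1) (by omega) hj
      simp only [Nat.add_sub_cancel] at hs
      exact (ihn (by omega) (by omega)).trans hs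
    · have : i = n + 1 := by omega
      rw [this]

noncomputable def birth (W : MorseSeq V) (μ : Finset V) : ℕ := sInf {i | μ ∈ W.seq i}

lemma birth_le {i : ℕ} (h : μ ∈ W.seq i) : birth W μ ≤ i := Nat.sInf_le h

lemma mem_seq_birth {i : ℕ} (h : μ ∈ W.seq i) : μ ∈ W.seq (birth W μ) := by
  have hne : Set.Nonempty {j | μ ∈ W.seq j} := ⟨i, h⟩
  exact Nat.sInf_mem hne

lemma birth_pos {i : ℕ} (h : μ ∈ W.seq i) : 1 ≤ birth W μ := by
  by_contra hb
  have h0 : birth W μ = 0 := by omega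
  have := mem_seq_birth h
  rw [h0, W.init] at this
  exact absurd this (Finset.notMem_empty μ)

lemma birth_eq {b : ℕ} (h1 : 1 ≤ b) (hk : b ≤ W.k) (hm : μ ∈ W.seq b)
    (hn : μ ∉ W.seq (b - 1)) : birth W μ = b := by
  have hle := birth_le hm
  by_contra hne
  have hlt : birth W μ ≤ b - 1 := by omega
  exact hn (W.mono hlt (by omega) (mem_seq_birth hm))

lemma sdiff_sdiff_of_subset' {A s : Finset (Finset V)} (h : s ⊆ A) : A \ (A \ s) = s := by
  rw [Finset.sdiff_sdiff_self_left, Finset.inter_eq_right.2 h]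

/-- Classification of a face of `K` according to the step at which it is born. -/
lemma birth_step (hμ : μ ∈ W.cplx) :
    1 ≤ birth W μ ∧ birth W μ ≤ W.k ∧
    (W.Critical μ ∨
      ∃ σ τ, IsFreePair (W.seq (birth W μ)) σ τ ∧
        W.seq (birth W μ) \ W.seq (birth W μ - 1) = {σ, τ} ∧ (μ = σ ∨ μ = τ)) := by
  have hμk : μ ∈ W.seq W.k := hμ
  have hb1 : 1 ≤ birth W μ := birth_pos hμk
  have hbk : birth W μ ≤ W.k := birth_le hμk
  refine ⟨hb1, hbk, ?_⟩
  have hmem : μ ∈ W.seq (birth W μ) := mem_seq_birth hμk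
  have hnot : μ ∉ W.seq (birth W μ - 1) := by
    intro h
    have := birth_le h
    omega
  rcases W.step (birth W μ) hb1 hbk with ⟨σ, τ, hfree, hL⟩ | ⟨ν, hfac, hL⟩
  · right
    have hdiff : W.seq (birth W μ) \ W.seq (birth W μ - 1) = {σ, τ} := by
      rw [hL]; exact sdiff_sdiff_of_subset' (Finset.insert_subset hfree.1 (by simpa using hfree.2.1))
    refine ⟨σ, τ, hfree, hdiff, ?_⟩
    have : μ ∈ ({σ, τ} : Finset (Finset V)) := by
      rw [← hdiff]; exact Finset.mem_sdiff.2 ⟨hmem, hnot⟩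
    simpa using this
  · left
    have hdiff : W.seq (birth W μ) \ W.seq (birth W μ - 1) = {ν} := by
      rw [hL]; exact sdiff_sdiff_of_subset' (by simpa using hfac.1)
    have : μ ∈ ({ν} : Finset (Finset V)) := by
      rw [← hdiff]; exact Finset.mem_sdiff.2 ⟨hmem, hnot⟩
    rw [Finset.mem_singleton] at this
    exact ⟨birth W μ, hb1, hbk, this ▸ hdiff⟩

end Morse

section BirthLemmas

variable {W : MorseSeq V} {Λ Vee : Finset V → Finset (Finset V)}

lemma exists_other_of_even {s : Finset (Finset V)} {a : Finset V} (ha : a ∈ s)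
    (h : s.card % 2 = 0) : ∃ b ∈ s, b ≠ a := by
  have h1 : 1 ≤ s.card := Finset.card_pos.2 ⟨a, ha⟩
  have h2 : 1 < s.card := by omega
  obtain ⟨b, hb, hba⟩ := Finset.exists_mem_ne h2 a
  exact ⟨b, hb, hba⟩

lemma mem_cplx_of_mem_seq {μ : Finset V} {i : ℕ} (hi : i ≤ W.k) (h : μ ∈ W.seq i) :
    μ ∈ W.cplx :=
  W.mono hi le_rfl h

lemma ref_birth (hΛ : IsRefMap W Λ) :
    ∀ μ ∈ W.cplx, ∀ ν ∈ Λ μ, ν = μ ∨ birth W ν < birth W μ := by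
  obtain ⟨hfr, hcrit, hupper⟩ := hΛ
  suffices H : ∀ b : ℕ, ∀ μ ∈ W.cplx, birth W μ = b → ∀ ν ∈ Λ μ, ν = μ ∨ birth W ν < birth W μ by
    intro μ hμ; exact H (birth W μ) μ hμ rfl
  intro b
  induction b using Nat.strong_induction_on with
  | _ b ih =>
    intro μ hμ hb ν hν
    obtain ⟨hb1, hbk, hcases⟩ := birth_step hμ
    rcases hcases with hc | ⟨σ, τ, hfree, hdiff, hμστ⟩
    · left
      rw [hcrit μ hc] at hν
      exact Finset.mem_singleton.1 hν
    · have hreg : W.Regular σ τ := ⟨birth W μ, hb1, hbk, hfree.2.2.1, hdiff⟩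
      rcases hμστ with rfl | rfl
      · -- μ = σ (lower regular)
        have hUR : W.UpperRegular τ := ⟨μ, hreg⟩
        have hbdτ : chainSum (bd τ) Λ = ∅ := (hupper τ hUR).2
        have hK := W.cpx (birth W μ) hbk
        have hcard : μ.card + 1 = τ.card := freePair_card hK hfree
        have hμne : μ.Nonempty := (hK μ hfree.1).1
        have hμbd : μ ∈ bd τ := mem_bd.2 ⟨hfree.2.2.1.subset, hμne, hcard⟩
        have heven := count_even_of_chainSum_empty hbdτ ν
        have hμfil : μ ∈ (bd τ).filter (fun ρ => ν ∈ Λ ρ) := Finset.mem_filter.2 ⟨hμbd, hν⟩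
        obtain ⟨ρ, hρfil, hρμ⟩ := exists_other_of_even hμfil heven
        rw [Finset.mem_filter] at hρfil
        obtain ⟨hρbd, hνρ⟩ := hρfil
        rw [mem_bd] at hρbd
        obtain ⟨hρτ, hρne, hρc⟩ := hρbd
        have hρmem : ρ ∈ W.seq (birth W μ) := (hK τ hfree.2.1).2 ρ hρτ hρne
        have hρτne : ρ ≠ τ := by intro h; rw [h] at hρc; omega
        have hρseq : ρ ∈ W.seq (birth W μ - 1) := by
          by_contra hnot
          have h2 : ρ ∈ ({μ, τ} : Finset (Finset V)) := by
            rw [← hdiff]; exact Finset.mem_sdiff.2 ⟨hρmem, hnot⟩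
          simp only [Finset.mem_insert, Finset.mem_singleton] at h2
          tauto
        have hρb : birth W ρ < birth W μ := by
          have := birth_le hρseq; omega
        have hρK : ρ ∈ W.cplx := mem_cplx_of_mem_seq (by omega) hρseq
        rcases ih (birth W ρ) (by omega) ρ hρK rfl ν hνρ with h | h
        · right; rw [h]; exact hρb
        · right; omega
      · -- μ = τ (upper regular)
        have hUR : W.UpperRegular μ := ⟨σ, hreg⟩
        rw [(hupper μ hUR).1] at hν
        exact absurd hν (Finset.notMem_empty ν)

lemma coref_birth (hV : IsCorefMap W Vee) :
    ∀ μ ∈ W.cplx, ∀ ν ∈ Vee μ, ν = μ ∨ birth W μ < birth W ν := by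
  obtain ⟨hfr, hcrit, hlower⟩ := hV
  suffices H : ∀ d : ℕ, ∀ μ ∈ W.cplx, W.k - birth W μ < d →
      ∀ ν ∈ Vee μ, ν = μ ∨ birth W μ < birth W ν by
    intro μ hμ; exact H (W.k - birth W μ + 1) μ hμ (by omega)
  intro d
  induction d with
  | zero => intro μ _ h; omega
  | succ d ih =>
    intro μ hμ hd ν hν
    obtain ⟨hb1, hbk, hcases⟩ := birth_step hμ
    rcases hcases with hc | ⟨σ, τ, hfree, hdiff, hμστ⟩
    · left
      rw [hcrit μ hc] at hν
      exact Finset.mem_singleton.1 hν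
    · have hreg : W.Regular σ τ := ⟨birth W μ, hb1, hbk, hfree.2.2.1, hdiff⟩
      rcases hμστ with rfl | rfl
      · -- μ = σ (lower regular): Vee μ = ∅
        have hLR : W.LowerRegular μ := ⟨τ, hreg⟩
        rw [(hlower μ hLR).1] at hν
        exact absurd hν (Finset.notMem_empty ν)
      · -- μ = τ (upper regular)
        have hLR : W.LowerRegular σ := ⟨μ, hreg⟩
        have hcobd : chainSum (cobd W.cplx σ) Vee = ∅ := (hlower σ hLR).2
        have hK := W.cpx (birth W μ) hbk
        have hcard : σ.card + 1 = μ.card := freePair_card hK hfree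
        have hμK : μ ∈ W.cplx := hμ
        have hμcobd : μ ∈ cobd W.cplx σ := mem_cobd.2 ⟨hμK, hfree.2.2.1.subset, hcard⟩
        have heven := count_even_of_chainSum_empty hcobd ν
        have hμfil : μ ∈ (cobd W.cplx σ).filter (fun ρ => ν ∈ Vee ρ) :=
          Finset.mem_filter.2 ⟨hμcobd, hν⟩
        obtain ⟨ρ, hρfil, hρμ⟩ := exists_other_of_even hμfil heven
        rw [Finset.mem_filter] at hρfil
        obtain ⟨hρcobd, hνρ⟩ := hρfil
        rw [mem_cobd] at hρcobd
        obtain ⟨hρK, hσρ, hσρc⟩ := hρcobd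
        have hssub : σ ⊂ ρ := ssubset_of_subset_card hσρ (by omega)
        have hρnotseq : ρ ∉ W.seq (birth W μ) := by
          intro hmem
          exact hρμ (hfree.2.2.2 ρ hmem hssub)
        have hρb : birth W μ < birth W ρ := by
          by_contra hle
          exact hρnotseq (W.mono (by omega) hbk (mem_seq_birth hρK))
        have hρbk : birth W ρ ≤ W.k := birth_le hρK
        rcases ih ρ hρK (by omega) ν hνρ with h | h
        · right; rw [h]; exact hρb
        · right; omega

end BirthLemmas

section MainInduction

variable {W : MorseSeq V} {Λ Vee : Finset V → Finset (Finset V)}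

lemma isChainOf_mono {K K' c : Finset (Finset V)} {p : ℕ} (h : K ⊆ K')
    (hc : IsChainOf K p c) : IsChainOf K' p c :=
  fun μ hμ => ⟨h (hc μ hμ).1, (hc μ hμ).2⟩

lemma homology_ind (hΛ : IsRefMap W Λ) :
    ∀ i ≤ W.k, ∀ p : ℕ, ∀ w : Finset (Finset V), IsChainOf (W.seq i) p w →
      chainSum w bd = ∅ → chainSum w Λ = ∅ →
      ∃ c, IsChainOf (W.seq i) (p + 1) c ∧ chainSum c bd = w := by
  intro i
  induction i with
  | zero =>
    intro _ p w hw _ _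
    have hwe : w = ∅ := by
      rw [Finset.eq_empty_iff_forall_notMem]
      intro μ hμ
      have := (hw μ hμ).1
      rw [W.init] at this
      exact Finset.notMem_empty μ this
    exact ⟨∅, by intro μ hμ; exact absurd hμ (Finset.notMem_empty μ),
      by rw [hwe, chainSum_empty]⟩
  | succ i ih =>
    intro hik p w hw hcyc href
    have hstep := W.step (i + 1) (by omega) hik
    simp only [Nat.add_sub_cancel] at hstep
    have hsub : W.seq i ⊆ W.seq (i + 1) := by
      have := W.subset_succ (i := i + 1) (by omega) hik
      simpa using this
    rcases hstep with ⟨σ, τ, hfree, hL⟩ | ⟨ν, hfac, hL⟩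
    · -- expansion step adding the free pair (σ, τ)
      have hK1 := W.cpx (i + 1) hik
      have hcard : σ.card + 1 = τ.card := freePair_card hK1 hfree
      have hσne : σ.Nonempty := (hK1 σ hfree.1).1
      have hστ : σ ⊂ τ := hfree.2.2.1
      have hσbd : σ ∈ bd τ := mem_bd.2 ⟨hστ.subset, hσne, hcard⟩
      -- τ cannot belong to the cycle w
      have hτw : τ ∉ w := by
        intro hτw
        have hfilter : w.filter (fun μ => σ ∈ bd μ) = {τ} := by
          ext μ
          rw [Finset.mem_filter, Finset.mem_singleton]
          constructor
          · rintro ⟨hμw, hσμ⟩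
            rw [mem_bd] at hσμ
            exact hfree.2.2.2 μ ((hw μ hμw).1) (ssubset_of_subset_card hσμ.1 (by omega))
          · rintro rfl
            exact ⟨hτw, hσbd⟩
        have hmem : σ ∈ chainSum w bd := mem_chainSum.2 (by rw [hfilter]; rfl)
        rw [hcyc] at hmem
        exact Finset.notMem_empty σ hmem
      by_cases hσw : σ ∈ w
      · -- σ ∈ w : correct w by the boundary of τ
        have hcardσ : σ.card = p + 1 := (hw σ hσw).2
        have hdiff : W.seq (i + 1) \ W.seq i = {σ, τ} := by
          rw [hL]
          exact sdiff_sdiff_of_subset' (Finset.insert_subset hfree.1 (by simpa using hfree.2.1))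
        have hUR : W.UpperRegular τ := ⟨σ, i + 1, by omega, hik, hστ, by simpa using hdiff⟩
        have hbdτΛ : chainSum (bd τ) Λ = ∅ := ((hΛ.2.2) τ hUR).2
        set w' := w ∆ bd τ with hw'def
        have hbdmem : ∀ ρ ∈ bd τ, ρ ∈ W.seq (i + 1) ∧ ρ.card = p + 1 := by
          intro ρ hρ
          rw [mem_bd] at hρ
          exact ⟨(hK1 τ hfree.2.1).2 ρ hρ.1 hρ.2.1, by omega⟩
        have hw' : IsChainOf (W.seq i) p w' := by
          intro μ hμ
          have hμ' := Finset.mem_symmDiff.1 hμ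
          have hμK : μ ∈ W.seq (i + 1) ∧ μ.card = p + 1 := by
            rcases hμ' with ⟨h1, _⟩ | ⟨h1, _⟩
            · exact hw μ h1
            · exact hbdmem μ h1
          have hμσ : μ ≠ σ := by
            rintro rfl
            rcases hμ' with ⟨_, h2⟩ | ⟨_, h2⟩
            · exact h2 hσbd
            · exact h2 hσw
          have hμτ : μ ≠ τ := by
            rintro rfl
            omega
          refine ⟨?_, hμK.2⟩
          rw [hL]
          refine Finset.mem_sdiff.2 ⟨hμK.1, ?_⟩
          simp [hμσ, hμτ]
        have hcyc' : chainSum w' bd = ∅ := by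
          rw [hw'def, chainSum_symmDiff, hcyc, bd_bd]
          simp
        have href' : chainSum w' Λ = ∅ := by
          rw [hw'def, chainSum_symmDiff, href, hbdτΛ]
          simp
        obtain ⟨c, hc1, hc2⟩ := ih (by omega) p w' hw' hcyc' href'
        refine ⟨c ∆ {τ}, ?_, ?_⟩
        · intro μ hμ
          rcases Finset.mem_symmDiff.1 hμ with ⟨h1, _⟩ | ⟨h1, _⟩
          · exact ⟨hsub (hc1 μ h1).1, (hc1 μ h1).2⟩
          · rw [Finset.mem_singleton] at h1
            subst h1
            exact ⟨hfree.2.1, by omega⟩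
        · rw [chainSum_symmDiff, hc2, chainSum_singleton]
          rw [hw'def]
          exact symmDiff_symmDiff_cancel_right (bd τ) w
      · -- σ ∉ w and τ ∉ w : w already lives in the previous complex
        have hw0 : IsChainOf (W.seq i) p w := by
          intro μ hμ
          refine ⟨?_, (hw μ hμ).2⟩
          rw [hL]
          refine Finset.mem_sdiff.2 ⟨(hw μ hμ).1, ?_⟩
          simp only [Finset.mem_insert, Finset.mem_singleton]
          rintro (rfl | rfl)
          · exact hσw hμ
          · exact hτw hμ
        obtain ⟨c, hc1, hc2⟩ := ih (by omega) p w hw0 hcyc href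
        exact ⟨c, isChainOf_mono hsub hc1, hc2⟩
    · -- filling step adding the facet ν
      have hν : ν ∈ W.seq (i + 1) := hfac.1
      have hdiff : W.seq (i + 1) \ W.seq i = {ν} := by
        rw [hL]
        exact sdiff_sdiff_of_subset' (by simpa using hν)
      by_cases hνw : ν ∈ w
      · exfalso
        have hνi : ν ∉ W.seq i := by
          rw [hL]
          simp
        have hbν : birth W ν = i + 1 := birth_eq (by omega) hik hν (by simpa using hνi)
        have hcritν : W.Critical ν := ⟨i + 1, by omega, hik, by simpa using hdiff⟩
        have hΛν : Λ ν = {ν} := hΛ.2.1 ν hcritν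
        have hfilter : w.filter (fun μ => ν ∈ Λ μ) = {ν} := by
          ext μ
          rw [Finset.mem_filter, Finset.mem_singleton]
          constructor
          · rintro ⟨hμw, hνΛ⟩
            have hμK : μ ∈ W.cplx := mem_cplx_of_mem_seq hik (hw μ hμw).1
            rcases ref_birth hΛ μ hμK ν hνΛ with h | hlt
            · exact h.symm
            · exfalso
              have hbμ : birth W μ ≤ i + 1 := birth_le (hw μ hμw).1
              omega
          · rintro rfl
            exact ⟨hνw, by rw [hΛν]; exact Finset.mem_singleton_self _⟩
        have hmem : ν ∈ chainSum w Λ := mem_chainSum.2 (by rw [hfilter]; rfl)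
        rw [href] at hmem
        exact Finset.notMem_empty ν hmem
      · have hw0 : IsChainOf (W.seq i) p w := by
          intro μ hμ
          refine ⟨?_, (hw μ hμ).2⟩
          rw [hL]
          refine Finset.mem_sdiff.2 ⟨(hw μ hμ).1, ?_⟩
          simp only [Finset.mem_singleton]
          rintro rfl
          exact hνw hμ
        obtain ⟨c, hc1, hc2⟩ := ih (by omega) p w hw0 hcyc href
        exact ⟨c, isChainOf_mono hsub hc1, hc2⟩

end MainInduction

section CoMainInduction

variable {W : MorseSeq V} {Vee : Finset V → Finset (Finset V)}

lemma cohomology_ind (hV : IsCorefMap W Vee) :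
    ∀ d : ℕ, ∀ p : ℕ, ∀ w : Finset (Finset V), IsChainOf W.cplx p w →
      (∀ μ ∈ w, μ ∉ W.seq (W.k - d)) →
      chainSum w (cobd W.cplx) = ∅ → chainSum w Vee = ∅ →
      ∃ c, IsChainOf W.cplx (p - 1) c ∧ chainSum c (cobd W.cplx) = w := by
  intro d
  induction d with
  | zero =>
    intro p w hw hdis _ _
    have hwe : w = ∅ := by
      rw [Finset.eq_empty_iff_forall_notMem]
      intro μ hμ
      exact hdis μ hμ ((hw μ hμ).1)
    exact ⟨∅, by intro μ hμ; exact absurd hμ (Finset.notMem_empty μ),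
      by rw [hwe, chainSum_empty]⟩
  | succ d ih =>
    intro p w hw hdis hcoc hcor
    by_cases hkd : W.k ≤ d
    · refine ih p w hw ?_ hcoc hcor
      intro μ hμ
      have := hdis μ hμ
      rwa [show W.k - (d + 1) = W.k - d by omega] at this
    · push_neg at hkd
      set i := W.k - d with hidef
      have hi1 : 1 ≤ i := by omega
      have hik : i ≤ W.k := by omega
      have hdis' : ∀ μ ∈ w, μ ∉ W.seq (i - 1) := by
        intro μ hμ
        have := hdis μ hμ
        rwa [show W.k - (d + 1) = i - 1 by omega] at this
      have hKcplx : IsComplex W.cplx := W.cpx W.k le_rfl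
      rcases W.step i hi1 hik with ⟨σ, τ, hfree, hL⟩ | ⟨ν, hfac, hL⟩
      · -- expansion step adding the free pair (σ, τ)
        have hK := W.cpx i hik
        have hcard : σ.card + 1 = τ.card := freePair_card hK hfree
        have hστ : σ ⊂ τ := hfree.2.2.1
        have hσK : σ ∈ W.cplx := mem_cplx_of_mem_seq hik hfree.1
        have hτK : τ ∈ W.cplx := mem_cplx_of_mem_seq hik hfree.2.1
        have hσne : σ.Nonempty := (hK σ hfree.1).1
        have hτcobd : τ ∈ cobd W.cplx σ := mem_cobd.2 ⟨hτK, hστ.subset, hcard⟩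
        -- σ cannot belong to the cocycle w
        have hσw : σ ∉ w := by
          intro hσw
          have hfilter : w.filter (fun μ => τ ∈ cobd W.cplx μ) = {σ} := by
            ext μ
            rw [Finset.mem_filter, Finset.mem_singleton, mem_cobd]
            constructor
            · rintro ⟨hμw, hτK', hsub, hcardμ⟩
              have hμne : μ.Nonempty := (hKcplx μ (hw μ hμw).1).1
              have hμi : μ ∈ W.seq i := (hK τ hfree.2.1).2 μ hsub hμne
              have hμst : μ ∈ ({σ, τ} : Finset (Finset V)) := by
                by_contra h
                exact hdis' μ hμw (by rw [hL]; exact Finset.mem_sdiff.2 ⟨hμi, h⟩)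
              simp only [Finset.mem_insert, Finset.mem_singleton] at hμst
              rcases hμst with h | h
              · exact h
              · exfalso; rw [h] at hcardμ; omega
            · rintro rfl
              exact ⟨hσw, hτK, hστ.subset, hcard⟩
          have hmem : τ ∈ chainSum w (cobd W.cplx) := mem_chainSum.2 (by rw [hfilter]; rfl)
          rw [hcoc] at hmem
          exact Finset.notMem_empty τ hmem
        by_cases hτw : τ ∈ w
        · -- τ ∈ w : correct w by the coboundary of σ
          have hcardτ : τ.card = p + 1 := (hw τ hτw).2
          have hp1 : 1 ≤ p := by
            have := Finset.card_pos.2 hσne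
            omega
          have hdiff : W.seq i \ W.seq (i - 1) = {σ, τ} := by
            rw [hL]
            exact sdiff_sdiff_of_subset' (Finset.insert_subset hfree.1 (by simpa using hfree.2.1))
          have hLR : W.LowerRegular σ := ⟨τ, i, hi1, hik, hστ, hdiff⟩
          have hcobdσV : chainSum (cobd W.cplx σ) Vee = ∅ := (hV.2.2 σ hLR).2
          set w' := w ∆ cobd W.cplx σ with hw'def
          have hw' : IsChainOf W.cplx p w' := by
            intro μ hμ
            rcases Finset.mem_symmDiff.1 hμ with ⟨h1, _⟩ | ⟨h1, _⟩
            · exact hw μ h1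
            · rw [mem_cobd] at h1
              exact ⟨h1.1, by omega⟩
          have hdis'' : ∀ μ ∈ w', μ ∉ W.seq i := by
            intro μ hμ hμi
            rcases Finset.mem_symmDiff.1 hμ with ⟨h1, h2⟩ | ⟨h1, h2⟩
            · have hμst : μ ∈ ({σ, τ} : Finset (Finset V)) := by
                by_contra h
                exact hdis' μ h1 (by rw [hL]; exact Finset.mem_sdiff.2 ⟨hμi, h⟩)
              simp only [Finset.mem_insert, Finset.mem_singleton] at hμst
              rcases hμst with rfl | rfl
              · exact hσw h1
              · exact h2 hτcobd
            · rw [mem_cobd] at h1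
              have hssub : σ ⊂ μ := ssubset_of_subset_card h1.2.1 (by omega)
              have := hfree.2.2.2 μ hμi hssub
              rw [this] at h2
              exact h2 hτw
          have hcoc' : chainSum w' (cobd W.cplx) = ∅ := by
            rw [hw'def, chainSum_symmDiff, hcoc, cobd_cobd hKcplx]
            simp
          have hcor' : chainSum w' Vee = ∅ := by
            rw [hw'def, chainSum_symmDiff, hcor, hcobdσV]
            simp
          obtain ⟨c, hc1, hc2⟩ := ih p w' hw' (by
            intro μ hμ
            exact hdis'' μ hμ) hcoc' hcor'
          refine ⟨c ∆ {σ}, ?_, ?_⟩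
          · intro μ hμ
            rcases Finset.mem_symmDiff.1 hμ with ⟨h1, _⟩ | ⟨h1, _⟩
            · exact hc1 μ h1
            · rw [Finset.mem_singleton] at h1
              subst h1
              exact ⟨hσK, by omega⟩
          · rw [chainSum_symmDiff, hc2, chainSum_singleton, hw'def]
            exact symmDiff_symmDiff_cancel_right (cobd W.cplx σ) w
        · -- σ ∉ w and τ ∉ w
          refine ih p w hw ?_ hcoc hcor
          intro μ hμ hμi
          have hμst : μ ∈ ({σ, τ} : Finset (Finset V)) := by
            by_contra h
            exact hdis' μ hμ (by rw [hL]; exact Finset.mem_sdiff.2 ⟨hμi, h⟩)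
          simp only [Finset.mem_insert, Finset.mem_singleton] at hμst
          rcases hμst with rfl | rfl
          · exact hσw hμ
          · exact hτw hμ
      · -- filling step adding the facet ν
        have hν : ν ∈ W.seq i := hfac.1
        have hdiff : W.seq i \ W.seq (i - 1) = {ν} := by
          rw [hL]
          exact sdiff_sdiff_of_subset' (by simpa using hν)
        by_cases hνw : ν ∈ w
        · exfalso
          have hνi : ν ∉ W.seq (i - 1) := by
            rw [hL]; simp
          have hbν : birth W ν = i := birth_eq hi1 hik hν hνi
          have hcritν : W.Critical ν := ⟨i, hi1, hik, hdiff⟩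
          have hVν : Vee ν = {ν} := hV.2.1 ν hcritν
          have hfilter : w.filter (fun μ => ν ∈ Vee μ) = {ν} := by
            ext μ
            rw [Finset.mem_filter, Finset.mem_singleton]
            constructor
            · rintro ⟨hμw, hνV⟩
              have hμK : μ ∈ W.cplx := (hw μ hμw).1
              rcases coref_birth hV μ hμK ν hνV with h | hlt
              · exact h.symm
              · exfalso
                have : birth W μ ≤ i - 1 := by omega
                exact hdis' μ hμw (W.mono this (by omega) (mem_seq_birth hμK))
            · rintro rfl
              exact ⟨hνw, by rw [hVν]; exact Finset.mem_singleton_self _⟩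
          have hmem : ν ∈ chainSum w Vee := mem_chainSum.2 (by rw [hfilter]; rfl)
          rw [hcor] at hmem
          exact Finset.notMem_empty ν hmem
        · refine ih p w hw ?_ hcoc hcor
          intro μ hμ hμi
          have hμν : μ ∈ ({ν} : Finset (Finset V)) := by
            by_contra h
            exact hdis' μ hμ (by rw [hL]; exact Finset.mem_sdiff.2 ⟨hμi, by simpa using h⟩)
          rw [Finset.mem_singleton] at hμν
          rw [hμν] at hμ
          exact hνw hμ

end CoMainInduction

/-- Two `p`-cycles with the same reference are homologous; two
`p`-cocycles with the same coreference are cohomologous. -/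
theorem same_reference_implies_homologous (W : MorseSeq V)
    (Λ Vee : Finset V → Finset (Finset V))
    (hΛ : IsRefMap W Λ) (hV : IsCorefMap W Vee)
    (p : ℕ) (z z' : Finset (Finset V))
    (hz : IsChainOf W.cplx p z) (hz' : IsChainOf W.cplx p z') :
    (chainSum z bd = ∅ → chainSum z' bd = ∅ →
      chainSum z Λ = chainSum z' Λ → Homologous W.cplx p z z') ∧
    (chainSum z (cobd W.cplx) = ∅ → chainSum z' (cobd W.cplx) = ∅ →
      chainSum z Vee = chainSum z' Vee → Cohomologous W.cplx p z z') := by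
  have hw : IsChainOf W.cplx p (z ∆ z') := by
    intro μ hμ
    rcases Finset.mem_symmDiff.1 hμ with ⟨h, _⟩ | ⟨h, _⟩
    exacts [hz μ h, hz' μ h]
  constructor
  · intro h1 h2 heq
    have hcyc : chainSum (z ∆ z') bd = ∅ := by
      rw [chainSum_symmDiff, h1, h2]; simp
    have href : chainSum (z ∆ z') Λ = ∅ := by
      rw [chainSum_symmDiff, heq, symmDiff_self, Finset.bot_eq_empty]
    obtain ⟨c, hc1, hc2⟩ := homology_ind hΛ W.k le_rfl p (z ∆ z') hw hcyc href
    exact ⟨c, hc1, hc2⟩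
  · intro h1 h2 heq
    have hcoc : chainSum (z ∆ z') (cobd W.cplx) = ∅ := by
      rw [chainSum_symmDiff, h1, h2]; simp
    have hcor : chainSum (z ∆ z') Vee = ∅ := by
      rw [chainSum_symmDiff, heq, symmDiff_self, Finset.bot_eq_empty]
    have hdis : ∀ μ ∈ z ∆ z', μ ∉ W.seq (W.k - W.k) := by
      intro μ _ h
      rw [Nat.sub_self, W.init] at h
      exact Finset.notMem_empty μ h
    obtain ⟨c, hc1, hc2⟩ := cohomology_ind hV W.k p (z ∆ z') hw hdis hcoc hcor
    exact ⟨c, hc1, hc2⟩
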